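/- Let ab be an edge in a finite simplicial complex K, let K̂ = K ∪ (a * closure(St b)) be the complex obtained from K by adding all cones from a over simplices of the closed star of b, and let i: K ↪ K̂ be the inclusion. If ab satisfies the (p-1)-link condition in K, then the induced homomorphism i_*: H_p(K) → H_p(K̂) on p-th simplicial homology with integer coefficients is surjective. -/

import Mathlib

namespace ECpaper

variable {V : Type*} [LinearOrder V]

/-- A finite abstract simplicial complex on a (linearly ordered) vertex type `V`:
a finite collection of nonempty finite subsets of `V` such that every nonempty
subset of a member is a member. -/
structure SC (V : Type*) [LinearOrder V] where
  faces : Finset (Finset V)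
  nonempty_of_mem : ∀ σ ∈ faces, σ.Nonempty
  down_closed : ∀ σ ∈ faces, ∀ τ ⊆ σ, τ.Nonempty → τ ∈ faces

/-- The star of a set `X` of simplices: all simplices of `K` having some member
of `X` as a face. -/
def starOf (K : SC V) (X : Set (Finset V)) : Set (Finset V) :=
  {τ | τ ∈ K.faces ∧ ∃ σ ∈ X, σ ⊆ τ}

/-- The closure of a set `S` of simplices of `K`: all simplices of `S` together
with all of their faces. -/
def closureOf (K : SC V) (S : Set (Finset V)) : Set (Finset V) :=
  {τ | τ ∈ K.faces ∧ ∃ σ ∈ S, τ ⊆ σ}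

/-- The link of a set `X` of simplices: the simplices in the closure of the star of `X`
that do not belong to the star of the closure of `X`. -/
def linkOf (K : SC V) (X : Set (Finset V)) : Set (Finset V) :=
  closureOf K (starOf K X) \ starOf K (closureOf K X)

/-- The link of a vertex `a`. -/
def linkV (K : SC V) (a : V) : Set (Finset V) := linkOf K {{a}}

/-- The link of the edge `ab`. -/
def linkE (K : SC V) (a b : V) : Set (Finset V) := linkOf K {({a, b} : Finset V)}

/-- The link condition for the edge `ab` in `K`: `Lk a ∩ Lk b = Lk ab`. -/
def LinkCond (K : SC V) (a b : V) : Prop :=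
  linkV K a ∩ linkV K b = linkE K a b

/-- The `p`-link condition for the edge `ab` in `K`: either `p ≤ 0`, or `p > 0` and every
`(p-1)`-simplex (i.e. simplex of cardinality `p`) of `Lk a ∩ Lk b` lies in `Lk ab`. -/
def PLink (K : SC V) (a b : V) (p : ℤ) : Prop :=
  p ≤ 0 ∨ (0 < p ∧ ∀ ξ ∈ linkV K a ∩ linkV K b, (ξ.card : ℤ) = p → ξ ∈ linkE K a b)

/-- The dimension of a simplicial complex. -/
def dimSC (K : SC V) : ℤ := ((K.faces.sup Finset.card : ℕ) : ℤ) - 1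

/-- The vertex map of the contraction of the edge `ab`: identity everywhere except
that `b` is sent to `a`. -/
def contr (a b : V) : V → V := fun v => if v = b then a else v

/-- The ambient module of simplicial chains (over all dimensions) with `ℤ` coefficients;
the basis element corresponding to a finset is that simplex with its vertices in
increasing order. -/
abbrev FChain (V : Type*) [LinearOrder V] := Finset V →₀ ℤ

/-- The boundary of a single simplex (zero on vertices and on the empty set). -/
noncomputable def bndOf (σ : Finset V) : FChain V :=
  if σ.card ≤ 1 then 0
  else ∑ v ∈ σ, ((-1 : ℤ) ^ ((σ.filter (fun x => x < v)).card)) •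
        Finsupp.single (σ.erase v) (1 : ℤ)

/-- The simplicial boundary operator. -/
noncomputable def bnd : FChain V →ₗ[ℤ] FChain V :=
  Finsupp.lsum ℤ fun σ => LinearMap.toSpanSingleton ℤ (FChain V) (bndOf σ)

/-- The group of `p`-chains of `K`: the span of the `p`-simplices of `K`. -/
noncomputable def chains (K : SC V) (p : ℕ) : Submodule ℤ (FChain V) :=
  Submodule.span ℤ {x : FChain V | ∃ σ ∈ K.faces, σ.card = p + 1 ∧ x = Finsupp.single σ 1}

/-- The group of `p`-cycles of `K`. -/
noncomputable def cycles (K : SC V) (p : ℕ) : Submodule ℤ (FChain V) :=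
  chains K p ⊓ LinearMap.ker bnd

/-- The group of `p`-boundaries of `K`. -/
noncomputable def bdries (K : SC V) (p : ℕ) : Submodule ℤ (FChain V) :=
  (chains K (p + 1)).map bnd

/-- The `p`-th simplicial homology group of `K` with integer coefficients. -/
abbrev Hmlgy (K : SC V) (p : ℕ) : Type _ :=
  ↥(cycles K p) ⧸ ((bdries K p).comap (cycles K p).subtype)

/-- The homology class of a cycle. -/
noncomputable def HmlgyMk (K : SC V) (p : ℕ) (z : FChain V) (hz : z ∈ cycles K p) :
    Hmlgy K p :=
  Submodule.Quotient.mk ⟨z, hz⟩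

/-- The number of inversions in a list. -/
def inversions : List V → ℕ
  | [] => 0
  | x :: xs => (xs.filter (fun y => decide (y < x))).length + inversions xs

/-- Value of the chain map induced by a vertex map `f` on a single simplex: zero if `f` is
not injective on the simplex, and otherwise the image simplex signed by the permutation
rearranging the images of the vertices (in increasing order) into increasing order. -/
noncomputable def cmapOf (f : V → V) (σ : Finset V) : FChain V :=
  if (σ.image f).card = σ.card then
    ((-1 : ℤ) ^ inversions ((σ.sort (· ≤ ·)).map f)) • Finsupp.single (σ.image f) 1
  else 0

/-- The chain map induced by a vertex map `f`. -/
noncomputable def cmap (f : V → V) : FChain V →ₗ[ℤ] FChain V :=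
  Finsupp.lsum ℤ fun σ => LinearMap.toSpanSingleton ℤ (FChain V) (cmapOf f σ)

/-- Relative `p`-cycles of the pair `(L, L0)`: `p`-chains of `L` whose boundary is a
chain of `L0`. -/
noncomputable def relCycles (L L0 : SC V) (p : ℕ) : Submodule ℤ (FChain V) :=
  chains L p ⊓ Submodule.comap bnd (chains L0 (p - 1))

/-- Relative `p`-boundaries of the pair `(L, L0)`: boundaries of `(p+1)`-chains of `L`
together with `p`-chains of `L0`. -/
noncomputable def relBdries (L L0 : SC V) (p : ℕ) : Submodule ℤ (FChain V) :=
  (chains L (p + 1)).map bnd ⊔ chains L0 p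

/-- The `p`-th relative simplicial homology group of the pair `(L, L0)` with
integer coefficients. -/
abbrev RelHmlgy (L L0 : SC V) (p : ℕ) : Type _ :=
  ↥(relCycles L L0 p) ⧸ ((relBdries L L0 p).comap (relCycles L L0 p).subtype)

/-- The relative homology class of a relative cycle. -/
noncomputable def RelHmlgyMk (L L0 : SC V) (p : ℕ) (z : FChain V)
    (hz : z ∈ relCycles L L0 p) : RelHmlgy L L0 p :=
  Submodule.Quotient.mk ⟨z, hz⟩

/-- A pure simplicial complex of dimension `p`: it is formed by a (nonempty) collection of
`p`-simplices and all their proper faces. -/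
def IsPure (L : SC V) (p : ℕ) : Prop :=
  (∀ σ ∈ L.faces, ∃ τ ∈ L.faces, σ ⊆ τ ∧ τ.card = p + 1) ∧ ∃ σ ∈ L.faces, σ.card = p + 1

/-- An orientation of a complex: a choice of sign (`1` if the chosen orientation of the simplex
is the increasing order of the vertices, `-1` if the opposite) for each simplex. -/
def IsOrientation (K : SC V) (o : Finset V → ℤ) : Prop :=
  ∀ σ ∈ K.faces, o σ = 1 ∨ o σ = -1

/-- Incidence sign (with respect to increasing vertex order) between a codimension-one
face `σ` and a simplex `τ`: `(-1)^i` where `i` is the position in `τ` of the vertex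
missing in `σ`. -/
def incSign (σ τ : Finset V) : ℤ :=
  ∏ v ∈ τ \ σ, (-1 : ℤ) ^ ((τ.filter (fun x => x < v)).card)

/-- An edge of the graph `G_q(K)`: a pair of a `(q-1)`-simplex and an incident `q`-simplex. -/
def IsGEdge (K : SC V) (q : ℕ) (e : Finset V × Finset V) : Prop :=
  e.1 ∈ K.faces ∧ e.2 ∈ K.faces ∧ e.1.card = q ∧ e.2.card = q + 1 ∧ e.1 ⊆ e.2

/-- A circuit of the graph `G_q(K)`: a set of edges of `G_q(K)` in which every vertex of the
graph has even degree. -/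
def IsCircuit (K : SC V) (q : ℕ) (C : Finset (Finset V × Finset V)) : Prop :=
  (∀ e ∈ C, IsGEdge K q e) ∧
  ∀ ρ : Finset V,
    Even ((C.filter (fun e => e.1 = ρ)).card + (C.filter (fun e => e.2 = ρ)).card)

/-- Weight of an edge of `G_q(K)` under the orientation `o`. -/
def edgeWeight (o : Finset V → ℤ) (e : Finset V × Finset V) : ℤ :=
  o e.1 * o e.2 * incSign e.1 e.2

/-- Total weight of a circuit under the orientation `o`. -/
def circWeight (o : Finset V → ℤ) (C : Finset (Finset V × Finset V)) : ℤ :=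
  ∑ e ∈ C, edgeWeight o e

/-- A circuit is b-even if the sum of its edge weights is `0 mod 4`. -/
def BEven (o : Finset V → ℤ) (C : Finset (Finset V × Finset V)) : Prop :=
  circWeight o C % 4 = 0

/-- A circuit is b-odd if the sum of its edge weights is `2 mod 4`. -/
def BOdd (o : Finset V → ℤ) (C : Finset (Finset V × Finset V)) : Prop :=
  circWeight o C % 4 = 2

/-- A circuit `C` of `G_q(K)` has a chord: an edge of the graph not in `C` both of whose
endpoints are vertices of `C`. -/
def HasChord (K : SC V) (q : ℕ) (C : Finset (Finset V × Finset V)) : Prop :=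
  ∃ e : Finset V × Finset V, IsGEdge K q e ∧ e ∉ C ∧
    (∃ c ∈ C, c.1 = e.1) ∧ (∃ c ∈ C, c.2 = e.2)

/-- The boundary matrix `[∂_{p+1}]` of an oriented complex: rows indexed by `p`-simplices,
columns by `(p+1)`-simplices, entries the signed incidence numbers. -/
def boundaryMatrixSucc (K : SC V) (o : Finset V → ℤ) (p : ℕ) :
    Matrix {σ : Finset V // σ ∈ K.faces ∧ σ.card = p + 1}
      {τ : Finset V // τ ∈ K.faces ∧ τ.card = p + 2} ℤ :=
  fun σ τ => if σ.1 ⊆ τ.1 then edgeWeight o (σ.1, τ.1) else 0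

/-- `σ` is a collapsing simplex (w.r.t. contraction of `ab`). -/
def IsCollapsing (a b : V) (σ : Finset V) : Prop := a ∈ σ ∧ b ∈ σ

/-- `σ` and `σ'` are mirror simplices (w.r.t. contraction of `ab`). -/
def IsMirror (a b : V) (σ σ' : Finset V) : Prop :=
  a ∈ σ ∧ b ∈ σ' ∧ σ = insert a (σ'.erase b)

/-- The circuit `C` of `G_{p+1}(K)` contains (an edge incident to) a collapsing `p`-vertex. -/
def ContainsCollapsingLow (a b : V) (C : Finset (Finset V × Finset V)) : Prop :=
  ∃ e ∈ C, IsCollapsing a b e.1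

/-- The circuit `C` of `G_{p+1}(K)` contains a pair of `(p+1)`-vertices that are mirrors of
each other. -/
def ContainsMirrorHigh (a b : V) (C : Finset (Finset V × Finset V)) : Prop :=
  ∃ e ∈ C, ∃ e' ∈ C, IsMirror a b e.2 e'.2




-- ===== auxiliary infrastructure =====

lemma bnd_apply (x : FChain V) : bnd x = x.sum fun σ c => c • bndOf σ := by
  rw [bnd, Finsupp.lsum_apply]
  exact Finsupp.sum_congr fun σ _ => by rw [LinearMap.toSpanSingleton_apply]

lemma bnd_single (σ : Finset V) (c : ℤ) : bnd (Finsupp.single σ c) = c • bndOf σ := by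
  rw [bnd_apply, Finsupp.sum_single_index]; simp

lemma mem_support_bndOf {σ τ : Finset V} (h : τ ∈ (bndOf σ).support) :
    2 ≤ σ.card ∧ ∃ v ∈ σ, τ = σ.erase v := by
  unfold bndOf at h
  split at h
  · simp at h
  · next h2 =>
    refine ⟨by omega, ?_⟩
    have h3 := Finsupp.support_finset_sum h
    simp only [Finset.mem_biUnion] at h3
    obtain ⟨v, hv, hs⟩ := h3
    have := Finsupp.support_smul hs
    have := Finsupp.support_single_subset this
    simp only [Finset.mem_singleton] at this
    exact ⟨v, hv, this⟩

lemma bndOf_coeff {σ : Finset V} (h2 : 2 ≤ σ.card) {v : V} (hv : v ∈ σ) :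
    bndOf σ (σ.erase v) = (-1 : ℤ) ^ ((σ.filter (fun x => x < v)).card) := by
  unfold bndOf
  rw [if_neg (by omega)]
  rw [Finsupp.finset_sum_apply]
  rw [Finset.sum_eq_single v]
  · simp [Finsupp.single_apply]
  · intro w hw hwv
    have : σ.erase w ≠ σ.erase v := by
      intro h
      have : v ∈ σ.erase w := Finset.mem_erase.2 ⟨(Ne.symm hwv), hv⟩
      rw [h] at this
      exact (Finset.notMem_erase v σ) this
    simp [Finsupp.single_apply, this]
  · intro h; exact absurd hv h


-- number-of-smaller-elements bookkeeping
lemma filter_lt_erase_card {σ : Finset V} {v w : V} (hv : v ∈ σ) (hvw : v ≠ w) :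
    (σ.filter (fun x => x < w)).card
      = ((σ.erase v).filter (fun x => x < w)).card + (if v < w then 1 else 0) := by
  rw [Finset.filter_erase]
  by_cases h : v < w
  · have hm : v ∈ Finset.filter (fun x => x < w) σ := Finset.mem_filter.2 ⟨hv, h⟩
    rw [if_pos h, Finset.card_erase_of_mem hm]
    have h1 : 1 ≤ (σ.filter (fun x => x < w)).card := Finset.card_pos.2 ⟨v, hm⟩
    omega
  · rw [if_neg h, Finset.erase_eq_of_notMem (by simp [h])]
    omega

lemma neg_one_pow_smul_add {m n : ℕ} (h : Odd (m + n)) (x : FChain V) :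
    ((-1:ℤ)^m) • x + ((-1:ℤ)^n) • x = 0 := by
  have hp : (-1:ℤ)^m * (-1:ℤ)^n = -1 := by rw [← pow_add]; exact h.neg_one_pow
  rcases neg_one_pow_eq_or ℤ m with hm | hm <;>
    rcases neg_one_pow_eq_or ℤ n with hn | hn <;>
      rw [hm, hn] at hp ⊢ <;>
        first
          | (rw [one_smul, neg_one_smul]; exact add_neg_cancel x)
          | (rw [neg_one_smul, one_smul]; exact neg_add_cancel x)
          | norm_num at hp

lemma bnd_bndOf (σ : Finset V) : bnd (bndOf σ) = 0 := by
  unfold bndOf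
  split
  · simp
  next hc1 =>
    rw [map_sum]
    simp_rw [map_smul, bnd_single, one_smul]
    by_cases h3 : σ.card ≤ 2
    · apply Finset.sum_eq_zero
      intro v hv
      have : (σ.erase v).card ≤ 1 := by
        rw [Finset.card_erase_of_mem hv]; omega
      rw [bndOf, if_pos this, smul_zero]
    · have hexp : ∀ v ∈ σ, ((-1 : ℤ) ^ ((σ.filter (fun x => x < v)).card)) • bndOf (σ.erase v)
          = ∑ w ∈ σ.erase v, ((-1 : ℤ) ^ ((σ.filter (fun x => x < v)).card
              + (((σ.erase v).filter (fun x => x < w)).card))) •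
            Finsupp.single ((σ.erase v).erase w) (1 : ℤ) := by
        intro v hv
        rw [bndOf, if_neg (by rw [Finset.card_erase_of_mem hv]; omega), Finset.smul_sum]
        exact Finset.sum_congr rfl fun w hw => by rw [smul_smul, ← pow_add]
      rw [Finset.sum_congr rfl hexp, Finset.sum_sigma']
      refine Finset.sum_involution (fun p _ => ⟨p.2, p.1⟩) ?_ ?_ ?_ ?_
      · rintro ⟨v, w⟩ hp
        dsimp only
        simp only [Finset.mem_sigma, Finset.mem_erase] at hp
        obtain ⟨hv, hwv, hw⟩ := hp
        have hvw : v ≠ w := Ne.symm hwv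
        have hvew : v ∈ σ.erase w := Finset.mem_erase.2 ⟨hvw, hv⟩
        have e1 : ((σ.erase v).erase w) = ((σ.erase w).erase v) := Finset.erase_right_comm
        rw [e1]
        apply neg_one_pow_smul_add
        have k1 := filter_lt_erase_card hv hvw (w := w)
        have k2 := filter_lt_erase_card hw hwv (w := v)
        rcases lt_or_gt_of_ne hvw with hlt | hlt
        · rw [if_pos hlt] at k1
          rw [if_neg (not_lt.2 hlt.le)] at k2
          rw [Nat.odd_iff]; omega
        · rw [if_neg (not_lt.2 hlt.le)] at k1
          rw [if_pos hlt] at k2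
          rw [Nat.odd_iff]; omega
      · rintro ⟨v, w⟩ hp _
        dsimp only
        simp only [Finset.mem_sigma, Finset.mem_erase] at hp
        intro h
        have := congrArg Sigma.fst h
        simp only at this
        exact hp.2.1 this
      · rintro ⟨v, w⟩ hp
        dsimp only
        simp only [Finset.mem_sigma, Finset.mem_erase] at hp ⊢
        exact ⟨hp.2.2, Ne.symm hp.2.1, hp.1⟩
      · rintro ⟨v, w⟩ _; rfl

lemma bnd_bnd (x : FChain V) : bnd (bnd x) = 0 := by
  rw [bnd_apply x, map_finsuppSum]
  have h : ∀ σ ∈ x.support, bnd (x σ • bndOf σ) = (fun (_ : Finset V) (_ : ℤ) => (0 : FChain V)) σ (x σ) :=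
    fun σ _ => by rw [map_smul, bnd_bndOf, smul_zero]
  exact Finset.sum_eq_zero fun σ hσ => h σ hσ


noncomputable def coneOf (w : V) (σ : Finset V) : FChain V :=
  if w ∈ σ then 0
  else ((-1 : ℤ) ^ ((σ.filter (fun x => x < w)).card)) • Finsupp.single (insert w σ) (1 : ℤ)

noncomputable def coneMap (w : V) : FChain V →ₗ[ℤ] FChain V :=
  Finsupp.lsum ℤ fun σ => LinearMap.toSpanSingleton ℤ (FChain V) (coneOf w σ)

lemma coneMap_apply (w : V) (x : FChain V) :
    coneMap w x = x.sum fun σ c => c • coneOf w σ := by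
  rw [coneMap, Finsupp.lsum_apply]
  exact Finsupp.sum_congr fun σ _ => by rw [LinearMap.toSpanSingleton_apply]

lemma coneMap_single (w : V) (σ : Finset V) (c : ℤ) :
    coneMap w (Finsupp.single σ c) = c • coneOf w σ := by
  rw [coneMap_apply, Finsupp.sum_single_index]; simp

lemma mem_support_coneOf {w : V} {σ τ : Finset V} (h : τ ∈ (coneOf w σ).support) :
    w ∉ σ ∧ τ = insert w σ := by
  unfold coneOf at h
  split at h
  · simp at h
  · next hw =>
    have := Finsupp.support_smul h
    have := Finsupp.support_single_subset this
    simp only [Finset.mem_singleton] at this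
    exact ⟨hw, this⟩

lemma mem_support_coneMap {w : V} {x : FChain V} {τ : Finset V}
    (h : τ ∈ (coneMap w x).support) : w ∈ τ := by
  rw [coneMap_apply] at h
  have h2 := Finsupp.support_sum h
  simp only [Finset.mem_biUnion] at h2
  obtain ⟨σ, _, hs⟩ := h2
  have := mem_support_coneOf (Finsupp.support_smul hs)
  rw [this.2]
  exact Finset.mem_insert_self w σ

/-- The chain-homotopy identity for the cone operator, on a single simplex. -/
lemma bnd_coneOf {b : V} {σ : Finset V} (hb : b ∉ σ) (h2 : 2 ≤ σ.card) :
    bnd (coneOf b σ) = Finsupp.single σ 1 - coneMap b (bndOf σ) := by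
  have hcard : (insert b σ).card = σ.card + 1 := Finset.card_insert_of_notMem hb
  have h1 : bnd (coneOf b σ) =
      ((-1:ℤ) ^ ((σ.filter (fun x => x < b)).card)) • bndOf (insert b σ) := by
    rw [coneOf, if_neg hb, map_smul, bnd_single, one_smul]
  have h2' : bndOf (insert b σ) = ∑ v ∈ insert b σ,
      ((-1 : ℤ) ^ (((insert b σ).filter (fun x => x < v)).card)) •
        Finsupp.single ((insert b σ).erase v) (1 : ℤ) := by
    rw [bndOf, if_neg (by omega)]
  have h3 : bndOf σ = ∑ v ∈ σ, ((-1 : ℤ) ^ ((σ.filter (fun x => x < v)).card)) •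
        Finsupp.single (σ.erase v) (1 : ℤ) := by
    rw [bndOf, if_neg (by omega)]
  rw [h1, h2', Finset.sum_insert hb, smul_add, Finset.smul_sum]
  have hb0 : (insert b σ).filter (fun x => x < b) = σ.filter (fun x => x < b) := by
    rw [Finset.filter_insert, if_neg (lt_irrefl b)]
  have hbe : (insert b σ).erase b = σ := Finset.erase_insert hb
  rw [hb0, hbe, smul_smul, ← pow_add]
  rw [Even.neg_one_pow ⟨(σ.filter (fun x => x < b)).card, rfl⟩, one_smul]
  rw [h3, map_sum, sub_eq_add_neg, ← Finset.sum_neg_distrib]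
  congr 1
  apply Finset.sum_congr rfl
  intro v hv
  have hbv : b ≠ v := fun h => hb (h ▸ hv)
  -- rewrite the cone term
  rw [map_smul, coneMap_single, one_smul, coneOf,
    if_neg (fun h => hb (Finset.mem_of_mem_erase h))]
  have herase : (insert b σ).erase v = insert b (σ.erase v) :=
    Finset.erase_insert_of_ne hbv
  rw [herase, smul_smul, smul_smul, ← pow_add, ← pow_add]
  rw [← neg_smul]
  have key : ((-1:ℤ) ^ ((σ.filter (fun x => x < b)).card
        + ((insert b σ).filter (fun x => x < v)).card))
      = -((-1:ℤ) ^ ((σ.filter (fun x => x < v)).card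
        + ((σ.erase v).filter (fun x => x < b)).card)) := by
    have e1 : ((insert b σ).filter (fun x => x < v)).card
        = (σ.filter (fun x => x < v)).card + (if b < v then 1 else 0) := by
      rw [Finset.filter_insert]
      by_cases h : b < v
      · rw [if_pos h, if_pos h, Finset.card_insert_of_notMem (fun hc => hb (Finset.mem_of_mem_filter _ hc))]
      · rw [if_neg h, if_neg h]; omega
    have e2 := filter_lt_erase_card hv (Ne.symm hbv) (w := b)
    have hodd : Odd ((σ.filter (fun x => x < b)).card
        + ((insert b σ).filter (fun x => x < v)).card
        + ((σ.filter (fun x => x < v)).card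
        + ((σ.erase v).filter (fun x => x < b)).card)) := by
      rw [Nat.odd_iff]
      rcases lt_or_gt_of_ne hbv with hlt | hlt
      · rw [if_pos hlt] at e1
        rw [if_neg (not_lt.2 hlt.le)] at e2
        omega
      · rw [if_neg (not_lt.2 hlt.le)] at e1
        rw [if_pos hlt] at e2
        omega
    have := neg_one_pow_smul_add (V := V) hodd (Finsupp.single (insert b (σ.erase v)) 1)
    -- derive scalar identity from it? easier: direct integer computation
    have hp : (-1:ℤ)^((σ.filter (fun x => x < b)).card
        + ((insert b σ).filter (fun x => x < v)).card)
        * (-1:ℤ)^((σ.filter (fun x => x < v)).card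
        + ((σ.erase v).filter (fun x => x < b)).card) = -1 := by
      rw [← pow_add]; exact hodd.neg_one_pow
    rcases neg_one_pow_eq_or ℤ ((σ.filter (fun x => x < b)).card
        + ((insert b σ).filter (fun x => x < v)).card) with hm | hm <;>
      rcases neg_one_pow_eq_or ℤ ((σ.filter (fun x => x < v)).card
        + ((σ.erase v).filter (fun x => x < b)).card) with hn | hn <;>
        rw [hm, hn] at hp ⊢
    all_goals norm_num at hp <;> norm_num
  rw [key]


lemma bnd_coneMap (w : V) (y : FChain V)
    (hy : ∀ τ ∈ y.support, w ∉ τ ∧ 2 ≤ τ.card) :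
    bnd (coneMap w y) = y - coneMap w (bnd y) := by
  rw [coneMap_apply w y, map_finsuppSum]
  have step : ∀ τ ∈ y.support, bnd (y τ • coneOf w τ)
      = (fun τ (c : ℤ) => c • Finsupp.single τ (1:ℤ) - c • coneMap w (bndOf τ)) τ (y τ) := by
    intro τ hτ
    rw [map_smul, bnd_coneOf (hy τ hτ).1 (hy τ hτ).2, smul_sub]
  rw [Finsupp.sum_congr (g1 := fun τ (c : ℤ) => bnd (c • coneOf w τ))
    (g2 := fun τ (c : ℤ) => c • Finsupp.single τ (1:ℤ) - c • coneMap w (bndOf τ)) step,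
    Finsupp.sum_sub]
  congr 1
  · conv_rhs => rw [← Finsupp.sum_single y]
    exact Finsupp.sum_congr fun τ _ => by rw [Finsupp.smul_single, smul_eq_mul, mul_one]
  · rw [bnd_apply, map_finsuppSum]
    exact (Finsupp.sum_congr fun τ _ => by rw [map_smul]).symm

lemma chains_eq_supported (L : SC V) (p : ℕ) :
    chains L p = Finsupp.supported ℤ ℤ {σ | σ ∈ L.faces ∧ σ.card = p + 1} := by
  rw [Finsupp.supported_eq_span_single, chains]
  congr 1
  ext x
  simp only [Set.mem_setOf_eq, Set.mem_image]
  constructor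
  · rintro ⟨σ, h1, h2, rfl⟩; exact ⟨σ, ⟨h1, h2⟩, rfl⟩
  · rintro ⟨σ, ⟨h1, h2⟩, rfl⟩; exact ⟨σ, h1, h2, rfl⟩

lemma mem_chains_iff {L : SC V} {p : ℕ} {x : FChain V} :
    x ∈ chains L p ↔ ∀ σ ∈ x.support, σ ∈ L.faces ∧ σ.card = p + 1 := by
  rw [chains_eq_supported, Finsupp.mem_supported]
  constructor
  · intro h σ hσ; exact h hσ
  · intro h σ hσ; exact h σ hσ

lemma bnd_mem_chains {L : SC V} {p : ℕ} {x : FChain V} (hx : x ∈ chains L (p+1)) :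
    bnd x ∈ chains L p := by
  rw [mem_chains_iff] at hx ⊢
  intro τ hτ
  rw [bnd_apply] at hτ
  have h2 := Finsupp.support_sum hτ
  simp only [Finset.mem_biUnion] at h2
  obtain ⟨σ, hσ, hs⟩ := h2
  obtain ⟨hc2, v, hv, rfl⟩ := mem_support_bndOf (Finsupp.support_smul hs)
  obtain ⟨hσL, hσc⟩ := hx σ hσ
  have hne : (σ.erase v).Nonempty := by
    rw [← Finset.card_pos, Finset.card_erase_of_mem hv]; omega
  refine ⟨L.down_closed σ hσL _ (Finset.erase_subset v σ) hne, ?_⟩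
  rw [Finset.card_erase_of_mem hv]; omega

lemma mem_linkV_iff {K : SC V} {a : V} (ha : ({a} : Finset V) ∈ K.faces) (ξ : Finset V) :
    ξ ∈ linkV K a ↔ ξ ∈ K.faces ∧ a ∉ ξ ∧ insert a ξ ∈ K.faces := by
  unfold linkV linkOf closureOf starOf
  simp only [Set.mem_diff, Set.mem_setOf_eq, Set.mem_singleton_iff]
  constructor
  · rintro ⟨⟨hξ, σ, ⟨hσK, ρ, hρ, hρσ⟩, hsub⟩, hneg⟩
    subst hρ
    have haσ : a ∈ σ := hρσ (Finset.mem_singleton_self a)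
    have haξ : a ∉ ξ := by
      intro haξ
      exact hneg ⟨hξ, {a}, ⟨ha, {a}, rfl, subset_rfl⟩, Finset.singleton_subset_iff.2 haξ⟩
    refine ⟨hξ, haξ, K.down_closed σ hσK _ ?_ ⟨a, Finset.mem_insert_self a ξ⟩⟩
    exact Finset.insert_subset haσ hsub
  · rintro ⟨hξ, haξ, hins⟩
    refine ⟨⟨hξ, insert a ξ, ⟨hins, {a}, rfl, Finset.singleton_subset_iff.2 (Finset.mem_insert_self a ξ)⟩,
      Finset.subset_insert a ξ⟩, ?_⟩
    rintro ⟨-, σ, ⟨hσK, ρ, hρ, hσρ⟩, hσξ⟩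
    subst hρ
    obtain ⟨x, hx⟩ := K.nonempty_of_mem σ hσK
    have : x = a := Finset.mem_singleton.1 (hσρ hx)
    exact haξ (this ▸ hσξ hx)

lemma mem_linkE_iff {K : SC V} {a b : V} (hab : ({a, b} : Finset V) ∈ K.faces) (ξ : Finset V) :
    ξ ∈ linkE K a b ↔ ξ ∈ K.faces ∧ a ∉ ξ ∧ b ∉ ξ ∧ insert a (insert b ξ) ∈ K.faces := by
  unfold linkE linkOf closureOf starOf
  simp only [Set.mem_diff, Set.mem_setOf_eq, Set.mem_singleton_iff]
  have haK : ({a} : Finset V) ∈ K.faces :=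
    K.down_closed _ hab _ (Finset.singleton_subset_iff.2 (Finset.mem_insert_self a {b}))
      (Finset.singleton_nonempty a)
  have hbK : ({b} : Finset V) ∈ K.faces :=
    K.down_closed _ hab _ (Finset.singleton_subset_iff.2 (by simp))
      (Finset.singleton_nonempty b)
  constructor
  · rintro ⟨⟨hξ, σ, ⟨hσK, ρ, hρ, hρσ⟩, hsub⟩, hneg⟩
    subst hρ
    have haξ : a ∉ ξ := fun haξ =>
      hneg ⟨hξ, {a}, ⟨haK, {a, b}, rfl,
        Finset.singleton_subset_iff.2 (Finset.mem_insert_self a {b})⟩,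
        Finset.singleton_subset_iff.2 haξ⟩
    have hbξ : b ∉ ξ := fun hbξ =>
      hneg ⟨hξ, {b}, ⟨hbK, {a, b}, rfl, Finset.singleton_subset_iff.2 (by simp)⟩,
        Finset.singleton_subset_iff.2 hbξ⟩
    refine ⟨hξ, haξ, hbξ, K.down_closed σ hσK _ ?_ ⟨a, by simp⟩⟩
    refine Finset.insert_subset (hρσ (by simp)) (Finset.insert_subset (hρσ (by simp)) hsub)
  · rintro ⟨hξ, haξ, hbξ, hins⟩
    refine ⟨⟨hξ, insert a (insert b ξ), ⟨hins, {a, b}, rfl, ?_⟩, ?_⟩, ?_⟩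
    · intro x hx
      simp only [Finset.mem_insert] at hx ⊢
      rcases hx with h | h
      · exact Or.inl h
      · simp [Finset.mem_singleton.1 h]
    · intro x hx; simp [hx]
    · rintro ⟨-, σ, ⟨hσK, ρ, hρ, hσρ⟩, hσξ⟩
      subst hρ
      obtain ⟨x, hx⟩ := K.nonempty_of_mem σ hσK
      have hx2 := hσρ hx
      simp only [Finset.mem_insert, Finset.mem_singleton] at hx2
      rcases hx2 with rfl | rfl
      · exact haξ (hσξ hx)
      · exact hbξ (hσξ hx)

lemma key_lemma (K Khat : SC V) (a b : V) (hne : a ≠ b)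
    (hab : ({a, b} : Finset V) ∈ K.faces)
    (hKhat : ∀ τ : Finset V, τ ∈ Khat.faces ↔
      (τ ∈ K.faces ∨ (τ.Nonempty ∧ ∃ σ ∈ closureOf K (starOf K {{b}}), τ ⊆ insert a σ)))
    (p : ℕ) (hpl : PLink K a b ((p : ℤ) - 1))
    (z : FChain V) (hz : z ∈ cycles Khat p) :
    ∃ w, w ∈ cycles K p ∧ z - w ∈ bdries Khat p := by
  classical
  have hzc : z ∈ chains Khat p := (Submodule.mem_inf.1 hz).1
  have hzk0 : bnd z = 0 := LinearMap.mem_ker.1 (Submodule.mem_inf.1 hz).2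
  have haK : ({a} : Finset V) ∈ K.faces :=
    K.down_closed _ hab _ (Finset.singleton_subset_iff.2 (by simp)) (Finset.singleton_nonempty a)
  have hbK : ({b} : Finset V) ∈ K.faces :=
    K.down_closed _ hab _ (Finset.singleton_subset_iff.2 (by simp)) (Finset.singleton_nonempty b)
  have new_struct : ∀ τ, τ ∈ Khat.faces → τ ∉ K.faces →
      a ∈ τ ∧ ∃ σ₁ ∈ K.faces, b ∈ σ₁ ∧ τ.erase a ⊆ σ₁ := by
    intro τ hτ hτK
    rcases (hKhat τ).1 hτ with h | ⟨hne', σ, hσ, hsub⟩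
    · exact absurd h hτK
    obtain ⟨hσK, σ₁, hσ₁, hσσ₁⟩ := hσ
    obtain ⟨hσ₁K, ρ, hρ, hρσ₁⟩ := hσ₁
    rw [Set.mem_singleton_iff] at hρ
    subst hρ
    have hbσ₁ : b ∈ σ₁ := hρσ₁ (Finset.mem_singleton_self b)
    have haτ : a ∈ τ := by
      by_contra haτ
      apply hτK
      apply K.down_closed σ hσK τ ?_ hne'
      intro x hx
      rcases Finset.mem_insert.1 (hsub hx) with rfl | h
      · exact absurd hx haτ
      · exact h
    refine ⟨haτ, σ₁, hσ₁K, hbσ₁, ?_⟩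
    intro x hx
    obtain ⟨hxa, hxτ⟩ := Finset.mem_erase.1 hx
    rcases Finset.mem_insert.1 (hsub hxτ) with rfl | h
    · exact absurd rfl hxa
    · exact hσσ₁ h
  have hzch : ∀ τ ∈ z.support, τ ∈ Khat.faces ∧ τ.card = p + 1 := mem_chains_iff.1 hzc
  set y₁ : FChain V := Finsupp.filter (fun τ => τ ∉ K.faces ∧ b ∉ τ) z with hy₁
  have hy₁supp : ∀ τ ∈ y₁.support, τ ∈ z.support ∧ τ ∉ K.faces ∧ b ∉ τ := by
    intro τ h
    rw [hy₁, Finsupp.support_filter, Finset.mem_filter] at h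
    exact ⟨h.1, h.2⟩
  have hbig : ∀ τ ∈ z.support, τ ∉ K.faces → 2 ≤ τ.card := by
    intro τ hτ hτK
    have h1 := (hzch τ hτ).1
    have ha := (new_struct τ h1 hτK).1
    have hcτ := (hzch τ hτ).2
    by_contra h
    push_neg at h
    have hc1 : τ.card = 1 := by omega
    obtain ⟨x, hx⟩ := Finset.card_eq_one.1 hc1
    subst hx
    have : a = x := Finset.mem_singleton.1 ha
    subst this
    exact hτK haK
  have hy₁cone : ∀ τ ∈ y₁.support, b ∉ τ ∧ 2 ≤ τ.card := by
    intro τ h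
    obtain ⟨h1, h2, h3⟩ := hy₁supp τ h
    exact ⟨h3, hbig τ h1 h2⟩
  set c₁ := coneMap b y₁ with hc₁
  have hcone : bnd c₁ = y₁ - coneMap b (bnd y₁) := bnd_coneMap b y₁ hy₁cone
  have hc₁mem : c₁ ∈ chains Khat (p + 1) := by
    rw [mem_chains_iff]
    intro ρ hρ
    rw [hc₁, coneMap_apply] at hρ
    have h2 := Finsupp.support_sum hρ
    simp only [Finset.mem_biUnion] at h2
    obtain ⟨τ, hτ, hs⟩ := h2
    obtain ⟨hbτ, rfl⟩ := mem_support_coneOf (Finsupp.support_smul hs)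
    obtain ⟨hzτ, hτK, -⟩ := hy₁supp τ hτ
    obtain ⟨hτKhat, hτcard⟩ := hzch τ hzτ
    obtain ⟨haτ, σ₁, hσ₁K, hbσ₁, hsub⟩ := new_struct τ hτKhat hτK
    constructor
    · rw [hKhat]
      refine Or.inr ⟨⟨b, Finset.mem_insert_self b τ⟩, insert b (τ.erase a), ?_, ?_⟩
      · refine ⟨?_, σ₁, ⟨hσ₁K, {b}, rfl, Finset.singleton_subset_iff.2 hbσ₁⟩,
          Finset.insert_subset hbσ₁ hsub⟩
        exact K.down_closed σ₁ hσ₁K _ (Finset.insert_subset hbσ₁ hsub)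
          ⟨b, Finset.mem_insert_self _ _⟩
      · intro x hx
        rcases Finset.mem_insert.1 hx with rfl | hxτ
        · exact Finset.mem_insert_of_mem (Finset.mem_insert_self _ _)
        · by_cases hxa : x = a
          · subst hxa; exact Finset.mem_insert_self _ _
          · exact Finset.mem_insert_of_mem
              (Finset.mem_insert_of_mem (Finset.mem_erase.2 ⟨hxa, hxτ⟩))
    · rw [Finset.card_insert_of_notMem hbτ, hτcard]
  set z' := z - bnd c₁ with hz'def
  have hz'chains : z' ∈ chains Khat p := sub_mem hzc (bnd_mem_chains hc₁mem)
  have hz'cyc : bnd z' = 0 := by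
    rw [hz'def, map_sub, hzk0, bnd_bnd, sub_zero]
  have hz'supp : ∀ τ ∈ z'.support, τ ∈ Khat.faces ∧ τ.card = p + 1 := mem_chains_iff.1 hz'chains
  have habsupp : ∀ τ ∈ z'.support, τ ∉ K.faces → a ∈ τ ∧ b ∈ τ := by
    intro τ hτ hτK
    have haτ := (new_struct τ (hz'supp τ hτ).1 hτK).1
    refine ⟨haτ, ?_⟩
    by_contra hbτ
    have hcoeff : z' τ = 0 := by
      rw [hz'def, Finsupp.sub_apply, hcone, Finsupp.sub_apply]
      have h1 : y₁ τ = z τ := by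
        rw [hy₁, Finsupp.filter_apply, if_pos ⟨hτK, hbτ⟩]
      have h2 : (coneMap b (bnd y₁)) τ = 0 := by
        rw [← Finsupp.notMem_support_iff]
        intro hmem
        exact hbτ (mem_support_coneMap hmem)
      rw [h1, h2]
      ring
    exact Finsupp.mem_support_iff.1 hτ hcoeff
  have hKz' : ∀ τ ∈ z'.support, τ ∈ K.faces := by
    intro τ₀ hτ₀
    by_contra hτ₀K
    obtain ⟨haτ₀, hbτ₀⟩ := habsupp τ₀ hτ₀ hτ₀K
    obtain ⟨hτ₀hat, hτ₀card⟩ := hz'supp τ₀ hτ₀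
    obtain ⟨-, σ₁, hσ₁K, hbσ₁, hsub⟩ := new_struct τ₀ hτ₀hat hτ₀K
    have hamem : a ∈ τ₀.erase b := Finset.mem_erase.2 ⟨hne, haτ₀⟩
    have hbmem : b ∈ τ₀.erase a := Finset.mem_erase.2 ⟨Ne.symm hne, hbτ₀⟩
    have herₐ : τ₀.erase a ∈ K.faces :=
      K.down_closed σ₁ hσ₁K _ hsub ⟨b, hbmem⟩
    have hc3 : 3 ≤ τ₀.card := by
      by_contra h
      push_neg at h
      have hss : ({a, b} : Finset V) ⊆ τ₀ :=
        Finset.insert_subset haτ₀ (Finset.singleton_subset_iff.2 hbτ₀)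
      have hcab : ({a, b} : Finset V).card = 2 := by
        rw [Finset.card_insert_of_notMem (by simp [hne]), Finset.card_singleton]
      have h2 := Finset.eq_of_subset_of_card_le hss (by omega)
      exact hτ₀K (h2 ▸ hab)
    set ξ := (τ₀.erase a).erase b with hξ
    have hbins : insert b ξ = τ₀.erase a := Finset.insert_erase hbmem
    have hξ' : ξ = (τ₀.erase b).erase a := Finset.erase_right_comm
    have hains : insert a ξ = τ₀.erase b := by rw [hξ']; exact Finset.insert_erase hamem
    have hξcard : ξ.card = p - 1 := by
      rw [hξ, Finset.card_erase_of_mem hbmem, Finset.card_erase_of_mem haτ₀]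
      omega
    have hp2 : 2 ≤ p := by omega
    have hξne : ξ.Nonempty := by
      rw [← Finset.card_pos, hξcard]; omega
    have hξK : ξ ∈ K.faces :=
      K.down_closed _ herₐ ξ (by rw [hξ]; exact Finset.erase_subset _ _) hξne
    have haξ : a ∉ ξ := by rw [hξ']; intro h; exact Finset.notMem_erase a _ h
    have hbξ : b ∉ ξ := by rw [hξ]; exact Finset.notMem_erase b _
    have hτ₀eq : insert a (insert b ξ) = τ₀ := by
      rw [hbins]; exact Finset.insert_erase haτ₀
    have hηnotK : τ₀.erase b ∉ K.faces := by
      intro hηK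
      have hlmemA : ξ ∈ linkV K a :=
        (mem_linkV_iff haK ξ).2 ⟨hξK, haξ, by rw [hains]; exact hηK⟩
      have hlmemB : ξ ∈ linkV K b :=
        (mem_linkV_iff hbK ξ).2 ⟨hξK, hbξ, by rw [hbins]; exact herₐ⟩
      rcases hpl with h | ⟨hp0, h⟩
      · have : (2 : ℤ) ≤ (p : ℤ) := by exact_mod_cast hp2
        omega
      · have hcast : (ξ.card : ℤ) = (p : ℤ) - 1 := by
          rw [hξcard, Nat.cast_sub (by omega : 1 ≤ p)]
          norm_num
        have hlE := h ξ ⟨hlmemA, hlmemB⟩ hcast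
        rw [mem_linkE_iff hab ξ] at hlE
        exact hτ₀K (hτ₀eq ▸ hlE.2.2.2)
    have h0 : (bnd z') (τ₀.erase b) = 0 := by rw [hz'cyc]; simp
    rw [bnd_apply, Finsupp.sum_apply] at h0
    have h0' : ∑ τ ∈ z'.support, ((z' τ • bndOf τ) (τ₀.erase b)) = 0 := h0
    have hother : ∀ τ ∈ z'.support, τ ≠ τ₀ → ((z' τ • bndOf τ) (τ₀.erase b)) = 0 := by
      intro τ hτ hττ₀
      have hbnd0 : (bndOf τ) (τ₀.erase b) = 0 := by
        rw [← Finsupp.notMem_support_iff]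
        intro hmem
        obtain ⟨hc2, v, hv, hev⟩ := mem_support_bndOf hmem
        by_cases hτK : τ ∈ K.faces
        · apply hηnotK
          apply K.down_closed τ hτK _ (by rw [hev]; exact Finset.erase_subset v τ) ⟨a, hamem⟩
        · obtain ⟨h_a, h_b⟩ := habsupp τ hτ hτK
          have hvb : v = b := by
            by_contra hvb
            have hbmem2 : b ∈ τ.erase v := Finset.mem_erase.2 ⟨fun h => hvb h.symm, h_b⟩
            rw [← hev] at hbmem2
            exact Finset.notMem_erase b τ₀ hbmem2
          rw [hvb] at hev
          apply hττ₀
          rw [← Finset.insert_erase h_b, ← hev, Finset.insert_erase hbτ₀]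
      rw [Finsupp.smul_apply, hbnd0, smul_zero]
    rw [Finset.sum_eq_single τ₀ hother (fun h => absurd hτ₀ h)] at h0'
    rw [Finsupp.smul_apply, bndOf_coeff (by omega) hbτ₀, smul_eq_mul] at h0'
    rcases mul_eq_zero.1 h0' with h | h
    · exact Finsupp.mem_support_iff.1 hτ₀ h
    · exact absurd h (pow_ne_zero _ (by norm_num))
  refine ⟨z', ?_, ?_⟩
  · refine Submodule.mem_inf.2 ⟨?_, LinearMap.mem_ker.2 hz'cyc⟩
    rw [mem_chains_iff]
    intro τ hτ
    exact ⟨hKz' τ hτ, (hz'supp τ hτ).2⟩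
  · have hzz : z - z' = bnd c₁ := sub_sub_cancel z (bnd c₁)
    rw [hzz]
    exact Submodule.mem_map_of_mem hc₁mem

/-- with `K̂ = K ∪ (a * closure(St b))`, if `ab` satisfies the `(p-1)`-link
condition then the inclusion-induced map `H_p(K) → H_p(K̂)` is surjective. -/
theorem statement5 (K Khat : SC V) (a b : V) (hne : a ≠ b)
    (hab : ({a, b} : Finset V) ∈ K.faces)
    (hKhat : ∀ τ : Finset V, τ ∈ Khat.faces ↔
      (τ ∈ K.faces ∨ (τ.Nonempty ∧ ∃ σ ∈ closureOf K (starOf K {{b}}), τ ⊆ insert a σ)))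
    (p : ℕ) (hpl : PLink K a b ((p : ℤ) - 1))
    (φ : Hmlgy K p →ₗ[ℤ] Hmlgy Khat p)
    (hφ : ∀ (z : FChain V) (hz : z ∈ cycles K p) (hz' : z ∈ cycles Khat p),
      φ (HmlgyMk K p z hz) = HmlgyMk Khat p z hz') :
    Function.Surjective φ := by
  intro c
  obtain ⟨⟨z, hz⟩, rfl⟩ := Submodule.Quotient.mk_surjective _ c
  obtain ⟨w, hw, hdiff⟩ := key_lemma K Khat a b hne hab hKhat p hpl z hz
  have hw' : w ∈ cycles Khat p := by
    have h1 : w ∈ chains Khat p := by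
      have h2 := (Submodule.mem_inf.1 hw).1
      rw [mem_chains_iff] at h2 ⊢
      exact fun σ hσ => ⟨(hKhat σ).2 (Or.inl (h2 σ hσ).1), (h2 σ hσ).2⟩
    exact Submodule.mem_inf.2 ⟨h1, (Submodule.mem_inf.1 hw).2⟩
  refine ⟨HmlgyMk K p w hw, ?_⟩
  rw [hφ w hw hw']
  unfold HmlgyMk
  rw [Submodule.Quotient.eq]
  have hmem : w - z ∈ bdries Khat p := by
    have h3 := neg_mem hdiff
    rwa [neg_sub] at h3
  simpa [Submodule.mem_comap] using hmem

end ECpaper
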